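/- Let v be odd, v = d·m, and let a_0,...,a_{v-1}, b_0,...,b_{v-1} ∈ {-1,1}. Define A_j = Σ_{i=0}^{m-1} a_{j+id} and B_j = Σ_{i=0}^{m-1} b_{j+id} for j = 0,...,d-1 (indices mod v). If PSD_A(s) + PSD_B(s) = 2v - 2 for all s = 1,...,v-1 and PSD_A(0) + PSD_B(0) = 4v - 2, then Σ_{j=0}^{d-1} (A_j² + B_j²) = 2(v + m - 1). -/

import Mathlib

open Finset Complex

lemma sum_range_mul_reindex {M : Type*} [AddCommMonoid M] (d m : ℕ) (hd : 0 < d)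
    (f : ℕ → M) :
    ∑ α ∈ range (d * m), f α
      = ∑ j ∈ range d, ∑ i ∈ range m, f (j + i * d) := by
  rw [← Finset.sum_product']
  apply Finset.sum_nbij' (fun α => (α % d, α / d)) (fun p => p.1 + p.2 * d)
  · intro α hα
    simp only [mem_range] at hα
    simp only [Finset.mem_product, mem_range]
    exact ⟨Nat.mod_lt _ hd, (Nat.div_lt_iff_lt_mul hd).mpr (by rwa [mul_comm] at hα)⟩
  · intro p hp
    simp only [Finset.mem_product, mem_range] at hp
    simp only [mem_range]
    calc p.1 + p.2 * d < d + p.2 * d := by omega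
      _ = (p.2 + 1) * d := by ring
      _ ≤ m * d := Nat.mul_le_mul_right d hp.2
      _ = d * m := mul_comm _ _
  · intro α hα; exact Nat.mod_add_div' α d
  · intro p hp
    simp only [Finset.mem_product, mem_range] at hp
    have h1 : (p.1 + p.2 * d) % d = p.1 := by
      rw [Nat.add_mul_mod_self_right, Nat.mod_eq_of_lt hp.1]
    have h2 : (p.1 + p.2 * d) / d = p.2 := by
      rw [Nat.add_mul_div_right _ _ hd, Nat.div_eq_of_lt hp.1]; omega
    simp [h1, h2]
  · intro α hα; congr 1; exact (Nat.mod_add_div' α d).symm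

lemma orth (d : ℕ) (hd : 0 < d) (j j' : ℕ) (hj : j < d) (hj' : j' < d) :
    ∑ t ∈ range d, Complex.exp (2 * (Real.pi : ℂ) * Complex.I * ((j : ℂ) - j') * t / d)
      = if j = j' then (d : ℂ) else 0 := by
  by_cases h : j = j'
  · subst h; simp
  · simp only [h, if_false]
    set z := Complex.exp (2 * (Real.pi : ℂ) * Complex.I * ((j : ℂ) - j') / d) with hz
    have hterm : ∀ t : ℕ, Complex.exp (2 * (Real.pi : ℂ) * Complex.I * ((j : ℂ) - j') * t / d) = z ^ t := by
      intro t
      rw [hz, ← Complex.exp_nat_mul]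
      congr 1; ring
    have hd0 : (d : ℂ) ≠ 0 := Nat.cast_ne_zero.mpr hd.ne'
    have hzd : z ^ d = 1 := by
      rw [hz, ← Complex.exp_nat_mul]
      have harg : (d : ℂ) * (2 * (Real.pi : ℂ) * Complex.I * ((j : ℂ) - j') / d)
          = (((j : ℤ) - (j' : ℤ) : ℤ) : ℂ) * (2 * Real.pi * Complex.I) := by
        push_cast; field_simp
      rw [harg, Complex.exp_int_mul_two_pi_mul_I]
    have h2 : (2 : ℂ) * Real.pi * Complex.I ≠ 0 := by
      simp [Real.pi_ne_zero, Complex.I_ne_zero, Complex.ofReal_ne_zero]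
    have hz1 : z ≠ 1 := by
      intro hcon
      rw [hz, Complex.exp_eq_one_iff] at hcon
      obtain ⟨n, hn⟩ := hcon
      have h3 : ((j : ℂ) - j') * (2 * (Real.pi : ℂ) * Complex.I)
          = ((n : ℂ) * d) * (2 * (Real.pi : ℂ) * Complex.I) := by
        field_simp at hn
        linear_combination (2 * (Real.pi : ℂ) * Complex.I) * hn
      have hjj : (j : ℂ) - j' = (n : ℂ) * d := mul_right_cancel₀ h2 h3
      have hz2 : ((j : ℤ) - j' : ℤ) = n * d := by exact_mod_cast hjj
      have habs : |(j : ℤ) - j'| < (d : ℤ) := by rw [abs_lt]; omega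
      rw [hz2, abs_mul, Int.abs_natCast] at habs
      have hd' : (0 : ℤ) < (d : ℤ) := by exact_mod_cast hd
      have hn1 : |n| < 1 := by nlinarith [abs_nonneg n]
      have : n = 0 := Int.abs_lt_one_iff.mp hn1
      rw [this] at hz2
      simp at hz2
      omega
    calc ∑ t ∈ range d, Complex.exp (2 * (Real.pi : ℂ) * Complex.I * ((j : ℂ) - j') * t / d)
        = ∑ t ∈ range d, z ^ t := by simp_rw [hterm]
      _ = (z ^ d - 1) / (z - 1) := geom_sum_eq hz1 d
      _ = 0 := by rw [hzd]; simp

lemma parseval (d : ℕ) (hd : 0 < d) (c : ℕ → ℝ) :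
    ∑ t ∈ range d, ‖∑ j ∈ range d,
        (c j : ℂ) * Complex.exp (2 * (Real.pi : ℂ) * Complex.I * j * t / d)‖ ^ 2
      = d * ∑ j ∈ range d, (c j) ^ 2 := by
  set S : ℕ → ℂ := fun t => ∑ j ∈ range d,
      (c j : ℂ) * Complex.exp (2 * (Real.pi : ℂ) * Complex.I * j * t / d) with hS
  have expand : ∀ t : ℕ, S t * (starRingEnd ℂ) (S t)
      = ∑ j ∈ range d, ∑ j' ∈ range d, (c j : ℂ) * c j'
          * Complex.exp (2 * (Real.pi : ℂ) * Complex.I * ((j : ℂ) - j') * t / d) := by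
    intro t
    rw [hS, map_sum, Finset.sum_mul_sum]
    refine Finset.sum_congr rfl fun j _ => Finset.sum_congr rfl fun j' _ => ?_
    rw [map_mul, Complex.conj_ofReal, ← Complex.exp_conj]
    have hconj : (starRingEnd ℂ) (2 * (Real.pi : ℂ) * Complex.I * j' * t / d)
        = -(2 * (Real.pi : ℂ) * Complex.I * j' * t / d) := by
      simp [map_div₀, map_mul, Complex.conj_I, Complex.conj_ofReal, map_ofNat]
      ring
    rw [hconj]
    calc (c j : ℂ) * Complex.exp (2 * (Real.pi : ℂ) * Complex.I * j * t / d)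
        * ((c j' : ℂ) * Complex.exp (-(2 * (Real.pi : ℂ) * Complex.I * j' * t / d)))
        = (c j : ℂ) * c j' * (Complex.exp (2 * (Real.pi : ℂ) * Complex.I * j * t / d)
            * Complex.exp (-(2 * (Real.pi : ℂ) * Complex.I * j' * t / d))) := by ring
      _ = (c j : ℂ) * c j'
            * Complex.exp (2 * (Real.pi : ℂ) * Complex.I * ((j : ℂ) - j') * t / d) := by
          rw [← Complex.exp_add]; congr 1; ring
  have key : ∑ t ∈ range d, ((‖S t‖ : ℂ)) ^ 2
      = (d : ℂ) * ∑ j ∈ range d, (c j : ℂ) ^ 2 := by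
    calc ∑ t ∈ range d, (‖S t‖ : ℂ) ^ 2
        = ∑ t ∈ range d, S t * (starRingEnd ℂ) (S t) := by
          refine Finset.sum_congr rfl fun t _ => ?_
          rw [← Complex.ofReal_pow, Complex.sq_norm, ← Complex.mul_conj]
      _ = ∑ j ∈ range d, ∑ j' ∈ range d, (c j : ℂ) * c j'
            * ∑ t ∈ range d, Complex.exp (2 * (Real.pi : ℂ) * Complex.I * ((j : ℂ) - j') * t / d) := by
          simp_rw [expand]
          rw [Finset.sum_comm]
          refine Finset.sum_congr rfl fun j _ => ?_
          rw [Finset.sum_comm]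
          exact Finset.sum_congr rfl fun j' _ => (Finset.mul_sum _ _ _).symm
      _ = ∑ j ∈ range d, ∑ j' ∈ range d, (c j : ℂ) * c j'
            * (if j = j' then (d : ℂ) else 0) := by
          refine Finset.sum_congr rfl fun j hj => Finset.sum_congr rfl fun j' hj' => ?_
          rw [orth d hd j j' (mem_range.mp hj) (mem_range.mp hj')]
      _ = (d : ℂ) * ∑ j ∈ range d, (c j : ℂ) ^ 2 := by
          simp only [mul_ite, mul_zero]
          rw [Finset.mul_sum]
          refine Finset.sum_congr rfl fun j hj => ?_
          rw [Finset.sum_ite_eq (range d) j (fun j' => (c j : ℂ) * c j' * d)]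
          simp [hj]; ring
  have h2 : ((∑ t ∈ range d, ‖S t‖ ^ 2 : ℝ) : ℂ)
      = ((d * ∑ j ∈ range d, c j ^ 2 : ℝ) : ℂ) := by
    push_cast
    exact key
  exact Complex.ofReal_injective h2

lemma dft_eq (d m : ℕ) (hd : 0 < d) (hm : 0 < m) (a : ℕ → ℝ) (t : ℕ) :
    ∑ α ∈ range (d * m), (a α : ℂ)
        * Complex.exp (2 * (Real.pi : ℂ) * Complex.I * α * (t * m : ℕ) / (d * m : ℕ))
      = ∑ j ∈ range d, ((∑ i ∈ range m, a (j + i * d) : ℝ) : ℂ)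
        * Complex.exp (2 * (Real.pi : ℂ) * Complex.I * j * t / d) := by
  rw [sum_range_mul_reindex d m hd]
  refine Finset.sum_congr rfl fun j _ => ?_
  push_cast
  rw [Finset.sum_mul]
  refine Finset.sum_congr rfl fun i _ => ?_
  congr 1
  have hd0 : (d : ℂ) ≠ 0 := Nat.cast_ne_zero.mpr hd.ne'
  have hm0 : (m : ℂ) ≠ 0 := Nat.cast_ne_zero.mpr hm.ne'
  have harg : 2 * (Real.pi : ℂ) * Complex.I * ((j : ℂ) + i * d) * ((t : ℂ) * m) / ((d : ℂ) * m)
      = 2 * (Real.pi : ℂ) * Complex.I * j * t / d + ((i * t : ℤ) : ℂ) * (2 * Real.pi * Complex.I) := by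
    push_cast; field_simp
  rw [harg, Complex.exp_add, Complex.exp_int_mul_two_pi_mul_I, mul_one]

noncomputable def PSD (v : ℕ) (x : ℕ → ℝ) (k : ℕ) : ℝ :=
  ‖∑ α ∈ Finset.range v, (x α : ℂ)
    * Complex.exp (2 * (Real.pi : ℂ) * Complex.I * α * k / v)‖ ^ 2

/-- Generalized constraint: `∑_j (A_j² + B_j²) = 2(v+m-1)`. -/
theorem stmt4 (v d m : ℕ) (hv : Odd v) (hv0 : 0 < v) (hdm : v = d * m)
    (a b : ℕ → ℝ)
    (ha : ∀ i, a i = -1 ∨ a i = 1) (hb : ∀ i, b i = -1 ∨ b i = 1)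
    (hpsd : ∀ s : ℕ, 1 ≤ s → s ≤ v - 1 → PSD v a s + PSD v b s = 2 * v - 2)
    (hpsd0 : PSD v a 0 + PSD v b 0 = 4 * v - 2) :
    ∑ j ∈ Finset.range d,
        ((∑ i ∈ Finset.range m, a (j + i * d)) ^ 2
          + (∑ i ∈ Finset.range m, b (j + i * d)) ^ 2)
      = 2 * ((v : ℝ) + m - 1) := by
  subst hdm
  have hd : 0 < d := by
    rcases Nat.eq_zero_or_pos d with h | h
    · subst h; simp at hv0
    · exact h
  have hm : 0 < m := by
    rcases Nat.eq_zero_or_pos m with h | h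
    · subst h; simp at hv0
    · exact h
  have hdR : (d : ℝ) ≠ 0 := Nat.cast_ne_zero.mpr hd.ne'
  -- Step 1: Parseval over ℤ/d for the DFT values at multiples of m
  have hA : ∑ t ∈ range d, PSD (d * m) a (t * m)
      = d * ∑ j ∈ range d, (∑ i ∈ range m, a (j + i * d)) ^ 2 := by
    rw [← parseval d hd (fun j => ∑ i ∈ range m, a (j + i * d))]
    refine Finset.sum_congr rfl fun t _ => ?_
    simp only [PSD]
    rw [dft_eq d m hd hm a t]
  have hB : ∑ t ∈ range d, PSD (d * m) b (t * m)
      = d * ∑ j ∈ range d, (∑ i ∈ range m, b (j + i * d)) ^ 2 := by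
    rw [← parseval d hd (fun j => ∑ i ∈ range m, b (j + i * d))]
    refine Finset.sum_congr rfl fun t _ => ?_
    simp only [PSD]
    rw [dft_eq d m hd hm b t]
  have hsum : ∑ t ∈ range d, (PSD (d * m) a (t * m) + PSD (d * m) b (t * m))
      = d * ∑ j ∈ range d,
          ((∑ i ∈ range m, a (j + i * d)) ^ 2 + (∑ i ∈ range m, b (j + i * d)) ^ 2) := by
    rw [Finset.sum_add_distrib, hA, hB, Finset.sum_add_distrib]
    ring
  -- Step 2: evaluate the sum using the PSD hypotheses
  have hval : ∑ t ∈ range d, (PSD (d * m) a (t * m) + PSD (d * m) b (t * m))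
      = (4 * (d * m : ℕ) - 2 : ℝ) + ((d - 1 : ℕ) : ℝ) * (2 * (d * m : ℕ) - 2) := by
    rw [Finset.range_eq_Ico, Finset.sum_eq_sum_Ico_succ_bot hd]
    have h0 : PSD (d * m) a (0 * m) + PSD (d * m) b (0 * m) = 4 * (d * m : ℕ) - 2 := by
      simpa using hpsd0
    rw [h0]
    congr 1
    have hconst : ∀ t ∈ Finset.Ico 1 d,
        PSD (d * m) a (t * m) + PSD (d * m) b (t * m) = 2 * (d * m : ℕ) - 2 := by
      intro t ht
      rw [Finset.mem_Ico] at ht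
      apply hpsd
      · calc 1 = 1 * 1 := (one_mul 1).symm
          _ ≤ t * m := Nat.mul_le_mul ht.1 hm
      · have h5 : (d - 1) * m = d * m - m := by rw [Nat.sub_mul, one_mul]
        have h6 : t * m ≤ (d - 1) * m := Nat.mul_le_mul_right m (by omega)
        omega
    rw [Finset.sum_congr rfl hconst, Finset.sum_const, Nat.card_Ico, nsmul_eq_mul]
  -- Step 3: conclude
  apply mul_left_cancel₀ hdR
  rw [← hsum, hval]
  have h1d : (1 : ℕ) ≤ d := hd
  rw [Nat.cast_sub h1d]
  push_cast
  ring
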